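/- Let x : ℕ → ℚ be a sequence and let n ≥ k ≥ 1 be integers. Then the sum over all compositions (j₁, …, j_k) of n into exactly k parts of the product x(j₁)·x(j₂)⋯x(j_k) equals (k!/n!) · B_{n,k}(1!·x(1), 2!·x(2), 3!·x(3), …). -/

import Mathlib

/-- The invert transform of a sequence `x : ℕ → ℚ` (indexed from 1, `x 0` ignored):
`(𝒴x)(0) = 0` and `(𝒴x)(n) = x n + ∑_{j=1}^{n-1} x j * (𝒴x)(n-j)` for `n ≥ 1`. -/
def invert (x : ℕ → ℚ) : ℕ → ℚ
  | 0 => 0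
  | n + 1 => x (n + 1) + ∑ j ∈ Finset.range n, x (j + 1) * invert x (n - j)
  termination_by n => n
  decreasing_by omega

/-- The partial Bell polynomial `B_{n,k}(z₁, z₂, …)`, evaluated at a sequence of rationals
`z` (indexed from 1, `z 0` ignored): the sum over all finitely supported `α : ℕ → ℕ` with
`α 0 = 0`, `∑ i, α i = k` and `∑ i, i * α i = n` of `(n! / ∏ i, (α i)!) * ∏ i (z i / i!)^(α i)`. -/
def partialBell (n k : ℕ) (z : ℕ → ℚ) : ℚ :=
  ∑ α ∈ ((Finset.range (n + 1)).finsuppAntidiag k).filter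
      (fun α => (∑ i ∈ Finset.range (n + 1), i * α i) = n ∧ α 0 = 0),
    ((n.factorial : ℚ) / ∏ i ∈ Finset.range (n + 1), ((α i).factorial : ℚ)) *
      ∏ i ∈ Finset.range (n + 1), (z i / (i.factorial : ℚ)) ^ α i

open Finset PowerSeries

private lemma sum_getD (L : List ℕ) :
    ∑ i ∈ Finset.range L.length, L.getD i 0 = L.sum := by
  induction L with
  | nil => simp
  | cons a t ih =>
    rw [List.length_cons, Finset.sum_range_succ']
    simp only [List.getD_cons_succ, List.getD_cons_zero, List.sum_cons, ih]
    omega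

private lemma prod_getD (x : ℕ → ℚ) (L : List ℕ) :
    ∏ i ∈ Finset.range L.length, x (L.getD i 0) = (L.map x).prod := by
  induction L with
  | nil => simp
  | cons a t ih =>
    rw [List.length_cons, Finset.prod_range_succ']
    simp only [List.getD_cons_succ, List.getD_cons_zero, List.map_cons, List.prod_cons, ih]
    ring

/-- For `n ≥ k ≥ 1`, the sum over all compositions of `n` into exactly `k` parts of the
products `x j₁ ⋯ x j_k` equals `(k!/n!) · B_{n,k}(1!·x 1, 2!·x 2, …)`. -/
theorem stmt_5 (x : ℕ → ℚ) (n k : ℕ) (hk : 1 ≤ k) (hkn : k ≤ n) :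
    ∑ c ∈ Finset.univ.filter (fun c : Composition n => c.length = k),
        (c.blocks.map fun j => x j).prod
      = ((k.factorial : ℚ) / (n.factorial : ℚ)) *
          partialBell n k (fun i => (i.factorial : ℚ) * x i) := by
  classical
  have step1 : ∑ c ∈ Finset.univ.filter (fun c : Composition n => c.length = k),
        (c.blocks.map fun j => x j).prod
      = PowerSeries.coeff n
          ((∑ j ∈ Finset.Icc 1 n, PowerSeries.C (x j) * PowerSeries.X ^ j) ^ k) := by
    classical
    set f : PowerSeries ℚ := ∑ j ∈ Finset.Icc 1 n, PowerSeries.C (x j) * PowerSeries.X ^ j with hf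
    have hcoeff : ∀ m, PowerSeries.coeff m f = if m ∈ Finset.Icc 1 n then x m else 0 := by
      intro m
      rw [hf, map_sum]
      simp only [PowerSeries.coeff_C_mul_X_pow]
      exact Finset.sum_ite_eq (Finset.Icc 1 n) m x
    rw [PowerSeries.coeff_pow]
    rw [← Finset.sum_filter_of_ne (p := fun l : ℕ →₀ ℕ => ∀ i ∈ Finset.range k, 1 ≤ l i)
      (fun l hl hne => ?_)]
    swap
    · intro i hi
      by_contra hli
      apply hne
      apply Finset.prod_eq_zero hi
      have h0 : l i = 0 := by omega
      rw [h0, hcoeff]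
      simp
    -- now the bijection
    refine Finset.sum_bij'
      (i := fun c hc => Finsupp.onFinset (Finset.range k) (fun i => c.blocks.getD i 0)
        (fun i hi => by
          simp only [Finset.mem_filter, Finset.mem_univ, true_and] at hc
          rw [Finset.mem_range]
          by_contra hik
          exact hi (List.getD_eq_default _ _ (by rw [c.blocks_length, hc]; omega))))
      (j := fun l hl => ⟨List.ofFn (fun i : Fin k => l i), ?_, ?_⟩)
      ?_ ?_ ?_ ?_ ?_
    · -- blocks_pos
      intro i hi
      rw [List.mem_ofFn] at hi
      obtain ⟨a, rfl⟩ := hi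
      simp only [Finset.mem_filter, Finset.mem_finsuppAntidiag] at hl
      exact hl.2 a (Finset.mem_range.2 a.2)
    · -- blocks_sum
      simp only [Finset.mem_filter, Finset.mem_finsuppAntidiag] at hl
      rw [List.sum_ofFn, Fin.sum_univ_eq_sum_range]
      exact hl.1.1
    · -- hi : i c ∈ filter
      intro c hc
      simp only [Finset.mem_filter, Finset.mem_univ, true_and] at hc
      simp only [Finset.mem_filter, Finset.mem_finsuppAntidiag]
      refine ⟨⟨?_, Finsupp.support_onFinset_subset⟩, ?_⟩
      · show ∑ i ∈ Finset.range k, c.blocks.getD i 0 = n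
        rw [← hc, ← c.blocks_length, sum_getD, c.blocks_sum]
      · intro i hi
        simp only [Finsupp.onFinset_apply]
        apply c.one_le_blocks
        rw [List.getD_eq_getElem _ _ (by rw [c.blocks_length, hc]; exact Finset.mem_range.1 hi)]
        exact List.getElem_mem _
    · -- hj : j l ∈ filter
      intro l hl
      simp only [Finset.mem_filter, Finset.mem_univ, true_and]
      simp [Composition.length]
    · -- left_inv : j (i c) = c
      intro c hc
      simp only [Finset.mem_filter, Finset.mem_univ, true_and] at hc
      ext1
      apply List.ext_getElem
      · simp [c.blocks_length, hc]
      · intro i h1 h2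
        simp only [List.getElem_ofFn, Finsupp.onFinset_apply]
        rw [List.getD_eq_getElem]
    · -- right_inv
      intro l hl
      ext a
      simp only [Finsupp.onFinset_apply]
      by_cases ha : a < k
      · rw [List.getD_eq_getElem _ _ (by simpa using ha)]
        simp
      · rw [List.getD_eq_default _ _ (by simpa using ha)]
        simp only [Finset.mem_filter, Finset.mem_finsuppAntidiag] at hl
        have := hl.1.2
        by_contra h
        exact absurd (Finset.mem_range.1 (this (Finsupp.mem_support_iff.2 (Ne.symm h)))) ha
    · -- term equality
      intro c hc
      simp only [Finset.mem_filter, Finset.mem_univ, true_and] at hc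
      rw [← prod_getD x c.blocks, show Finset.range c.blocks.length = Finset.range k by rw [c.blocks_length, hc]]
      apply Finset.prod_congr rfl
      intro i hi
      simp only [Finsupp.onFinset_apply]
      rw [hcoeff, if_pos]
      rw [Finset.mem_Icc]
      have hmem : c.blocks.getD i 0 ∈ c.blocks := by
        rw [List.getD_eq_getElem _ _ (by rw [c.blocks_length, hc]; exact Finset.mem_range.1 hi)]
        exact List.getElem_mem _
      refine ⟨c.one_le_blocks hmem, ?_⟩
      have := List.le_sum_of_mem hmem
      rwa [c.blocks_sum] at this
  have step2 : PowerSeries.coeff n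
        ((∑ j ∈ Finset.Icc 1 n, PowerSeries.C (x j) * PowerSeries.X ^ j) ^ k)
      = ∑ g ∈ Finset.piAntidiag (Finset.Icc 1 n) k,
          if (∑ j ∈ Finset.Icc 1 n, j * g j) = n then
            (Nat.multinomial (Finset.Icc 1 n) g : ℚ) * ∏ j ∈ Finset.Icc 1 n, x j ^ g j
          else 0 := by
    classical
    rw [Finset.sum_pow_eq_sum_piAntidiag, map_sum]
    apply Finset.sum_congr rfl
    intro g hg
    have hprod : ∏ j ∈ Finset.Icc 1 n, (PowerSeries.C (x j) * PowerSeries.X ^ j) ^ g j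
        = PowerSeries.C (∏ j ∈ Finset.Icc 1 n, x j ^ g j)
            * PowerSeries.X ^ (∑ j ∈ Finset.Icc 1 n, j * g j) := by
      rw [map_prod]
      rw [← Finset.prod_pow_eq_pow_sum, ← Finset.prod_mul_distrib]
      apply Finset.prod_congr rfl
      intro j _
      rw [mul_pow, map_pow, ← pow_mul]
    rw [hprod, ← map_natCast (PowerSeries.C (R := ℚ)) (Nat.multinomial (Finset.Icc 1 n) g),
      ← mul_assoc, ← map_mul, PowerSeries.coeff_C_mul_X_pow]
    split_ifs with h1 h2 h2
    · ring
    · exact absurd h1.symm h2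
    · exact absurd h2.symm h1
    · rfl
  have step3 : (∑ g ∈ Finset.piAntidiag (Finset.Icc 1 n) k,
        if (∑ j ∈ Finset.Icc 1 n, j * g j) = n then
          (Nat.multinomial (Finset.Icc 1 n) g : ℚ) * ∏ j ∈ Finset.Icc 1 n, x j ^ g j
        else 0)
      = ((k.factorial : ℚ) / (n.factorial : ℚ)) *
          partialBell n k (fun i => (i.factorial : ℚ) * x i) := by
    classical
    have hsub : Finset.Icc 1 n ⊆ Finset.range (n + 1) := by
      intro j hj
      rw [Finset.mem_range]
      exact Nat.lt_succ_of_le (Finset.mem_Icc.1 hj).2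
    rw [← Finset.sum_filter, partialBell, Finset.mul_sum]
    refine Finset.sum_bij'
      (i := fun g hg => Finsupp.onFinset (Finset.Icc 1 n) g (fun a ha =>
        (Finset.mem_piAntidiag.1 (Finset.mem_filter.1 hg).1).2 a ha))
      (j := fun α hα => ⇑α)
      ?_ ?_ ?_ ?_ ?_
    · -- i g ∈ finsupp-side set
      intro g hg
      obtain ⟨hg1, hg2⟩ := Finset.mem_filter.1 hg
      obtain ⟨hgs, hgsupp⟩ := Finset.mem_piAntidiag.1 hg1
      have h0 : ∀ j, j ∉ Finset.Icc 1 n → g j = 0 := fun j hj => by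
        by_contra h; exact hj (hgsupp j h)
      simp only [Finset.mem_filter, Finset.mem_finsuppAntidiag, Finsupp.onFinset_apply]
      refine ⟨⟨?_, Finsupp.support_onFinset_subset.trans hsub⟩, ?_, h0 0 (by simp)⟩
      · exact (Finset.sum_subset hsub (fun j _ hj => h0 j hj)).symm.trans hgs
      · exact (Finset.sum_subset hsub (fun j _ hj => by
          rw [h0 j hj, Nat.mul_zero])).symm.trans hg2
    · -- j α ∈ fun-side set
      intro α hα
      obtain ⟨hα1, hα2, hα3⟩ := Finset.mem_filter.1 hα
      obtain ⟨hαs, hαsupp⟩ := Finset.mem_finsuppAntidiag.1 hα1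
      have h0 : ∀ j, j ∉ Finset.Icc 1 n → α j = 0 := by
        intro j hj
        rcases Nat.eq_zero_or_pos j with rfl | hj1
        · exact hα3
        · by_contra h
          refine hj (Finset.mem_Icc.2 ⟨hj1, ?_⟩)
          have := hαsupp (Finsupp.mem_support_iff.2 h)
          rw [Finset.mem_range] at this
          omega
      simp only [Finset.mem_filter, Finset.mem_piAntidiag, ne_eq]
      refine ⟨⟨?_, fun i hi => by by_contra h; exact hi (h0 i h)⟩, ?_⟩
      · exact (Finset.sum_subset hsub (fun j _ hj => h0 j hj)).trans hαs
      · exact (Finset.sum_subset hsub (fun j _ hj => by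
          rw [h0 j hj, Nat.mul_zero])).trans hα2
    · -- left inv
      intro g hg
      funext a
      simp
    · -- right inv
      intro α hα
      ext a
      simp
    · -- terms
      intro g hg
      obtain ⟨hg1, hg2⟩ := Finset.mem_filter.1 hg
      obtain ⟨hgs, hgsupp⟩ := Finset.mem_piAntidiag.1 hg1
      have h0 : ∀ j, j ∉ Finset.Icc 1 n → g j = 0 := fun j hj => by
        by_contra h; exact hj (hgsupp j h)
      simp only [Finsupp.onFinset_apply]
      have hP : ∏ i ∈ Finset.range (n + 1), ((g i).factorial : ℚ)
          = ∏ i ∈ Finset.Icc 1 n, ((g i).factorial : ℚ) := by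
        symm
        exact Finset.prod_subset hsub (fun j _ hj => by rw [h0 j hj]; simp)
      have hQ : ∏ i ∈ Finset.range (n + 1), (((i.factorial : ℚ) * x i) / (i.factorial : ℚ)) ^ g i
          = ∏ j ∈ Finset.Icc 1 n, x j ^ g j := by
        rw [← Finset.prod_subset hsub (fun j _ hj => by rw [h0 j hj, pow_zero])]
        apply Finset.prod_congr rfl
        intro j _
        rw [mul_div_cancel_left₀ _ (by exact_mod_cast j.factorial_ne_zero : (j.factorial : ℚ) ≠ 0)]
      rw [hP, hQ]
      have hmult : (Nat.multinomial (Finset.Icc 1 n) g : ℚ)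
          = (k.factorial : ℚ) / ∏ i ∈ Finset.Icc 1 n, ((g i).factorial : ℚ) := by
        have hspec := Nat.multinomial_spec (Finset.Icc 1 n) g
        rw [hgs] at hspec
        have : ((∏ i ∈ Finset.Icc 1 n, (g i).factorial : ℕ) : ℚ)
            * (Nat.multinomial (Finset.Icc 1 n) g : ℚ) = (k.factorial : ℚ) := by
          exact_mod_cast congrArg (Nat.cast : ℕ → ℚ) hspec
        push_cast at this
        rw [eq_div_iff (by positivity), mul_comm]
        · exact this
      rw [hmult]
      have hn0 : (n.factorial : ℚ) ≠ 0 := by exact_mod_cast n.factorial_ne_zero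
      have hp0 : (∏ i ∈ Finset.Icc 1 n, ((g i).factorial : ℚ)) ≠ 0 := by positivity
      field_simp
  rw [step1, step2, step3]
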